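/- Let α > 0, p > 1, λ = 8, and let μ be a nonnegative Borel measure on a Carnot group G of homogeneous dimension M. For any negative integer m and any r > 0, one has the pointwise upper bound ∫_{λ^m r}^r [μ(B_t(x))/t^{M-αp}]^{1/(p-1)} dt/t ≤ C Σ_{Q ∈ D_{m+[log_λ r]}, ℓ(Q) ≤ r} [μ(Q**)/|Q|^{1-αp/M}]^{1/(p-1)} χ_Q(x), where Q** = B_{2λ^{k+2}}(x_j^k) for Q = E_j^k, and C depends only on M, p, α. -/

import Mathlib

open MeasureTheory ENNReal Set

/-- A dyadic cube decomposition of a metric measure space (Sawyer–Wheeden/Christ). -/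
structure MetricDyadicGrid (X : Type*) [MetricSpace X] [MeasurableSpace X] (lam : ℝ) where
  ι : Type
  countable : Countable ι
  cube : ι → Set X
  gen : ι → ℤ
  base : ℤ
  base_le : ∀ i, base ≤ gen i
  measurableSet : ∀ i, MeasurableSet (cube i)
  pairwise_disjoint : ∀ i j, i ≠ j → gen i = gen j → Disjoint (cube i) (cube j)
  cover : ∀ k : ℤ, base ≤ k → (⋃ i ∈ {i | gen i = k}, cube i) = Set.univ
  nested : ∀ i j, gen i ≤ gen j → cube i ⊆ cube j ∨ Disjoint (cube i) (cube j)
  center : ι → X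
  ball_subset : ∀ i, Metric.ball (center i) (lam ^ gen i) ⊆ cube i
  subset_ball : ∀ i, cube i ⊆ Metric.ball (center i) (lam ^ (gen i + 1))

lemma aux_rpow_le_rpow_of_nonpos {a b : ℝ≥0∞} {z : ℝ} (hab : a ≤ b) (hz : z ≤ 0) :
    b ^ z ≤ a ^ z := by
  have h := ENNReal.inv_le_inv.2 (ENNReal.rpow_le_rpow hab (neg_nonneg.2 hz))
  rwa [← ENNReal.rpow_neg, ← ENNReal.rpow_neg, neg_neg] at h

lemma aux_div {W d1 d2 c : ℝ≥0∞} (hc : c ≠ 0) (hc' : c ≠ ∞)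
    (h : d2 ≤ c * d1) : W / d1 ≤ c * (W / d2) :=
  calc W / d1 = c * W / (c * d1) := (ENNReal.mul_div_mul_left W d1 hc hc').symm
    _ = c * (W / (c * d1)) := by
        rw [div_eq_mul_inv, div_eq_mul_inv, mul_assoc]
    _ ≤ c * (W / d2) := mul_le_mul_right (ENNReal.div_le_div_left h W) c

/-- Pointwise upper bound for the truncated Wolff-type integral
`∫_{λ^m r}^r [μ(B_t(x))/t^{M-αp}]^{1/(p-1)} dt/t` by a discrete dyadic sum involving the
enlarged balls `Q** = B_{2λ^{k+2}}(x_j^k)`, over the grid `D_{m+[log_λ r]}`. -/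
theorem stmt_5 (M α p lam : ℝ) (cA : ℝ≥0∞) (hα : 0 < α) (hp : 1 < p) (hM : 0 < M)
    (hlam : lam = 8) (hcA : 0 < cA) (hcA' : cA < ∞) :
    ∃ C : ℝ≥0∞, 0 < C ∧ C < ∞ ∧
      ∀ (G : Type) (_ : MetricSpace G) (mG : MeasurableSpace G) (_ : BorelSpace G)
        (vol : Measure G)
        (_ : ∀ (x : G) (R : ℝ), 0 < R → vol (Metric.ball x R) = cA * ENNReal.ofReal (R ^ M))
        (m : ℤ) (_ : m < 0) (r : ℝ) (_ : 0 < r)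
        (D : MetricDyadicGrid G lam) (_ : D.base = m + ⌊Real.logb lam r⌋)
        (μ : Measure G) (x : G),
        (∫⁻ t in Set.Ioo (lam ^ m * r) r,
            (μ (Metric.ball x t) / ENNReal.ofReal (t ^ (M - α * p))) ^ (1 / (p - 1)) *
              ENNReal.ofReal t⁻¹) ≤
          C * ∑' Q : {Q : D.ι // lam ^ D.gen Q ≤ r},
            Set.indicator (D.cube Q.1)
              (fun _ =>
                (μ (Metric.ball (D.center Q.1) (2 * lam ^ (D.gen Q.1 + 2))) /
                  (vol (D.cube Q.1)) ^ (1 - α * p / M)) ^ (1 / (p - 1))) x := by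
  have hl0 : (0:ℝ) < lam := by rw [hlam]; norm_num
  have hl1 : (1:ℝ) < lam := by rw [hlam]; norm_num
  set q : ℝ := M - α * p with hq
  set e : ℝ := 1 - α * p / M with he
  set s : ℝ := 1 / (p - 1) with hs
  have hs0 : 0 < s := by
    rw [hs]; exact one_div_pos.2 (by linarith)
  have hMe : M * e = q := by
    rw [he, hq]; field_simp
  have heq : e = q / M := by
    rw [eq_div_iff hM.ne', mul_comm, hMe]
  -- basic rpow facts
  have hpow : ∀ (k : ℤ) (w : ℝ), ((lam ^ k : ℝ)) ^ w = lam ^ ((k:ℝ) * w) := by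
    intro k w
    rw [← Real.rpow_intCast lam k, ← Real.rpow_mul hl0.le]
  have hlabs1 : (1:ℝ) ≤ lam ^ |q| := by
    have := Real.rpow_le_rpow_of_exponent_le hl1.le (abs_nonneg q)
    simpa using this
  have hlabs0 : (0:ℝ) < lam ^ |q| := lt_of_lt_of_le one_pos hlabs1
  set K0 : ℝ≥0∞ := cA ^ e * ENNReal.ofReal (lam ^ |q|) * ENNReal.ofReal (lam ^ |q|) with hK0
  have hK0pos : 0 < K0 := by
    apply ENNReal.mul_pos
    apply mul_ne_zero
    · exact (ENNReal.rpow_pos hcA hcA'.ne).ne'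
    · simp [ENNReal.ofReal_pos.2 hlabs0, (ENNReal.ofReal_pos.2 hlabs0).ne']
    · exact (ENNReal.ofReal_pos.2 hlabs0).ne'
  have hK0top : K0 ≠ ∞ := by
    apply ENNReal.mul_ne_top
    apply ENNReal.mul_ne_top
    · simp [ENNReal.rpow_eq_top_iff, hcA.ne', hcA'.ne]
    · exact ENNReal.ofReal_ne_top
    · exact ENNReal.ofReal_ne_top
  refine ⟨K0 ^ s * ENNReal.ofReal lam, ?_, ?_, ?_⟩
  · exact ENNReal.mul_pos (ENNReal.rpow_pos hK0pos hK0top).ne'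
      (ENNReal.ofReal_pos.2 hl0).ne'
  · exact ENNReal.mul_lt_top (ENNReal.rpow_ne_top_of_nonneg hs0.le hK0top).lt_top
      ENNReal.ofReal_lt_top
  intro G iG mG bG vol hvol m hm r hr D hbase μ x
  -- choice of cubes containing x
  have exC : ∀ k : ℤ, D.base ≤ k → ∃ i, D.gen i = k ∧ x ∈ D.cube i := by
    intro k hk
    have hx : x ∈ ⋃ i ∈ {i | D.gen i = k}, D.cube i := by
      rw [D.cover k hk]; trivial
    simpa using hx
  choose idx hgen hmem using exC
  set g : ℤ → ℝ≥0∞ := fun k =>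
    if h : D.base ≤ k ∧ (lam:ℝ) ^ k ≤ r then
      (μ (Metric.ball (D.center (idx k h.1)) (2 * lam ^ (k + 2))) /
        (vol (D.cube (idx k h.1))) ^ e) ^ s
    else 0 with hg
  set S : ℤ → Set ℝ := fun k => Ico ((lam:ℝ) ^ k) (lam ^ (k + 1)) ∩ Ioo (lam ^ m * r) r
    with hS
  have ha0 : 0 < (lam:ℝ) ^ m * r := by positivity
  -- covering
  have hcov : Ioo ((lam:ℝ) ^ m * r) r ⊆ ⋃ k : ℤ, S k := by
    intro t ht
    have ht0 : 0 < t := lt_trans ha0 ht.1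
    refine mem_iUnion.2 ⟨⌊Real.logb lam t⌋, ⟨⟨?_, ?_⟩, ht⟩⟩
    · calc (lam:ℝ) ^ (⌊Real.logb lam t⌋) = lam ^ ((⌊Real.logb lam t⌋ : ℤ) : ℝ) :=
            (Real.rpow_intCast lam _).symm
        _ ≤ lam ^ Real.logb lam t :=
            Real.rpow_le_rpow_of_exponent_le hl1.le (Int.floor_le _)
        _ = t := Real.rpow_logb hl0 hl1.ne' ht0
    · calc t = lam ^ Real.logb lam t := (Real.rpow_logb hl0 hl1.ne' ht0).symm
        _ < lam ^ ((⌊Real.logb lam t⌋ + 1 : ℤ) : ℝ) := by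
            apply Real.rpow_lt_rpow_of_exponent_lt hl1
            push_cast
            exact Int.lt_floor_add_one _
        _ = lam ^ (⌊Real.logb lam t⌋ + 1 : ℤ) := Real.rpow_intCast lam _
  -- lam^{floor logb r} ≤ r
  have hKr : (lam:ℝ) ^ (⌊Real.logb lam r⌋) ≤ r := by
    calc (lam:ℝ) ^ (⌊Real.logb lam r⌋) = lam ^ ((⌊Real.logb lam r⌋ : ℤ) : ℝ) :=
          (Real.rpow_intCast lam _).symm
      _ ≤ lam ^ Real.logb lam r :=
          Real.rpow_le_rpow_of_exponent_le hl1.le (Int.floor_le _)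
      _ = r := Real.rpow_logb hl0 hl1.ne' hr
  -- key per-piece bound
  have key : ∀ k : ℤ,
      (∫⁻ t in S k, (μ (Metric.ball x t) / ENNReal.ofReal (t ^ q)) ^ s *
        ENNReal.ofReal t⁻¹) ≤ K0 ^ s * ENNReal.ofReal lam * g k := by
    intro k
    by_cases h : D.base ≤ k ∧ (lam:ℝ) ^ k ≤ r
    · -- main case
      set i := idx k h.1 with hi
      have hgeni : D.gen i = k := hgen k h.1
      have hxi : x ∈ D.cube i := hmem k h.1
      have hBk0 : (0:ℝ) < lam ^ k := zpow_pos hl0 k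
      have hBk10 : (0:ℝ) < lam ^ (k+1) := zpow_pos hl0 _
      have hgval : g k = (μ (Metric.ball (D.center i) (2 * lam ^ (k + 2))) /
          (vol (D.cube i)) ^ e) ^ s := by
        rw [hg]; simp only [dif_pos h]; rfl
      -- pointwise bound on S k
      have hpt : ∀ t ∈ S k,
          (μ (Metric.ball x t) / ENNReal.ofReal (t ^ q)) ^ s * ENNReal.ofReal t⁻¹ ≤
            K0 ^ s * g k * ENNReal.ofReal (((lam:ℝ) ^ k)⁻¹) := by
        intro t ht
        obtain ⟨⟨hk1, hk2⟩, ht'⟩ := ht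
        have ht0 : 0 < t := lt_of_lt_of_le hBk0 hk1
        -- ball inclusion
        have hball : Metric.ball x t ⊆ Metric.ball (D.center i) (2 * lam ^ (k + 2)) := by
          have hxc : dist x (D.center i) < lam ^ (k + 1) := by
            have h1 := D.subset_ball i hxi
            rw [hgeni] at h1
            exact Metric.mem_ball.1 h1
          intro y hy
          have hy' : dist y x < t := Metric.mem_ball.1 hy
          have h2 : (lam:ℝ) ^ (k+1) ≤ lam ^ (k+2) :=
            zpow_le_zpow_right₀ hl1.le (by omega)
          refine Metric.mem_ball.2 ?_
          calc dist y (D.center i) ≤ dist y x + dist x (D.center i) := dist_triangle _ _ _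
            _ < t + lam ^ (k+1) := add_lt_add hy' hxc
            _ ≤ lam ^ (k+1) + lam ^ (k+1) := by linarith [hk2.le]
            _ = 2 * lam ^ (k+1) := by ring
            _ ≤ 2 * lam ^ (k+2) := by linarith
        -- denominator lower bound
        have hden : lam ^ (-|q|) * ((lam:ℝ) ^ k) ^ q ≤ t ^ q := by
          rcases le_or_gt 0 q with hq0 | hq0
          · have h1 : ((lam:ℝ) ^ k) ^ q ≤ t ^ q := Real.rpow_le_rpow hBk0.le hk1 hq0
            have h2 : lam ^ (-|q|) ≤ 1 :=
              Real.rpow_le_one_of_one_le_of_nonpos hl1.le (neg_nonpos.2 (abs_nonneg q))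
            calc lam ^ (-|q|) * ((lam:ℝ) ^ k) ^ q ≤ 1 * ((lam:ℝ) ^ k) ^ q := by
                  apply mul_le_mul_of_nonneg_right h2 (Real.rpow_nonneg hBk0.le q)
              _ = ((lam:ℝ) ^ k) ^ q := one_mul _
              _ ≤ t ^ q := h1
          · have h1 : ((lam:ℝ) ^ (k+1)) ^ q ≤ t ^ q :=
              Real.rpow_le_rpow_of_nonpos ht0 hk2.le hq0.le
            have h2 : ((lam:ℝ) ^ (k+1)) ^ q = lam ^ (-|q|) * ((lam:ℝ) ^ k) ^ q := by
              rw [hpow, hpow, abs_of_neg hq0, neg_neg, ← Real.rpow_add hl0]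
              push_cast
              ring_nf
            rw [← h2]; exact h1
        -- volume of cube bounds
        have hvup : vol (D.cube i) ≤ cA * ENNReal.ofReal (((lam:ℝ) ^ (k+1)) ^ M) := by
          have h1 : D.cube i ⊆ Metric.ball (D.center i) (lam ^ (k+1)) := by
            have := D.subset_ball i; rw [hgeni] at this; exact this
          calc vol (D.cube i) ≤ vol (Metric.ball (D.center i) (lam ^ (k+1))) :=
                measure_mono h1
            _ = cA * ENNReal.ofReal (((lam:ℝ) ^ (k+1)) ^ M) := hvol _ _ hBk10
        have hvlo : cA * ENNReal.ofReal (((lam:ℝ) ^ k) ^ M) ≤ vol (D.cube i) := by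
          have h1 : Metric.ball (D.center i) (lam ^ k) ⊆ D.cube i := by
            have := D.ball_subset i; rw [hgeni] at this; exact this
          calc cA * ENNReal.ofReal (((lam:ℝ) ^ k) ^ M) =
                vol (Metric.ball (D.center i) (lam ^ k)) := (hvol _ _ hBk0).symm
            _ ≤ vol (D.cube i) := measure_mono h1
        -- (vol cube)^e ≤ cA^e * ofReal(lam^|q|) * ofReal((lam^k)^q)
        have hvole : (vol (D.cube i)) ^ e ≤
            cA ^ e * ENNReal.ofReal (lam ^ |q|) * ENNReal.ofReal (((lam:ℝ) ^ k) ^ q) := by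
          rcases le_or_gt 0 e with he0 | he0
          · have hq0 : 0 ≤ q := by
              rw [← hMe]; positivity
            have h1 : (vol (D.cube i)) ^ e ≤
                (cA * ENNReal.ofReal (((lam:ℝ) ^ (k+1)) ^ M)) ^ e :=
              ENNReal.rpow_le_rpow hvup he0
            have hexp : ((k+1 : ℤ) : ℝ) * M * e = (k:ℝ) * q + q := by
              push_cast
              linear_combination ((k:ℝ) + 1) * hMe
            have h2 : ((((lam:ℝ) ^ (k+1)) ^ M) ^ e : ℝ) ≤ lam ^ |q| * ((lam:ℝ) ^ k) ^ q := by
              calc ((((lam:ℝ) ^ (k+1)) ^ M) ^ e : ℝ) = lam ^ ((k:ℝ) * q + q) := by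
                    rw [hpow, ← Real.rpow_mul hl0.le, hexp]
                _ = lam ^ ((k:ℝ) * q) * lam ^ q := Real.rpow_add hl0 _ _
                _ ≤ lam ^ ((k:ℝ) * q) * lam ^ |q| :=
                    mul_le_mul_of_nonneg_left
                      (Real.rpow_le_rpow_of_exponent_le hl1.le (le_abs_self q))
                      (Real.rpow_nonneg hl0.le _)
                _ = lam ^ |q| * ((lam:ℝ) ^ k) ^ q := by rw [hpow]; ring
            calc (vol (D.cube i)) ^ e ≤ (cA * ENNReal.ofReal (((lam:ℝ) ^ (k+1)) ^ M)) ^ e := h1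
              _ = cA ^ e * (ENNReal.ofReal (((lam:ℝ) ^ (k+1)) ^ M)) ^ e :=
                  ENNReal.mul_rpow_of_nonneg _ _ he0
              _ = cA ^ e * ENNReal.ofReal ((((lam:ℝ) ^ (k+1)) ^ M) ^ e) := by
                  rw [ENNReal.ofReal_rpow_of_pos (Real.rpow_pos_of_pos hBk10 M)]
              _ ≤ cA ^ e * ENNReal.ofReal (lam ^ |q| * ((lam:ℝ) ^ k) ^ q) := by
                  exact mul_le_mul_right (ENNReal.ofReal_le_ofReal h2) _
              _ = cA ^ e * (ENNReal.ofReal (lam ^ |q|) * ENNReal.ofReal (((lam:ℝ) ^ k) ^ q)) := by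
                  rw [ENNReal.ofReal_mul hlabs0.le]
              _ = cA ^ e * ENNReal.ofReal (lam ^ |q|) * ENNReal.ofReal (((lam:ℝ) ^ k) ^ q) := by
                  ring
          · have h1 : (vol (D.cube i)) ^ e ≤
                (cA * ENNReal.ofReal (((lam:ℝ) ^ k) ^ M)) ^ e :=
              aux_rpow_le_rpow_of_nonpos hvlo he0.le
            have hofr0 : ENNReal.ofReal (((lam:ℝ) ^ k) ^ M) ≠ 0 :=
              (ENNReal.ofReal_pos.2 (Real.rpow_pos_of_pos hBk0 M)).ne'
            have hexp : (k : ℝ) * M * e = (k:ℝ) * q := by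
              linear_combination (k:ℝ) * hMe
            have h2 : ((((lam:ℝ) ^ k) ^ M) ^ e : ℝ) = ((lam:ℝ) ^ k) ^ q := by
              rw [hpow, ← Real.rpow_mul hl0.le, hexp, hpow]
            calc (vol (D.cube i)) ^ e ≤ (cA * ENNReal.ofReal (((lam:ℝ) ^ k) ^ M)) ^ e := h1
              _ = cA ^ e * (ENNReal.ofReal (((lam:ℝ) ^ k) ^ M)) ^ e :=
                  ENNReal.mul_rpow_of_ne_zero hcA.ne' hofr0 e
              _ = cA ^ e * ENNReal.ofReal (((lam:ℝ) ^ k) ^ q) := by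
                  rw [ENNReal.ofReal_rpow_of_pos (Real.rpow_pos_of_pos hBk0 M), h2]
              _ ≤ cA ^ e * (ENNReal.ofReal (lam ^ |q|) * ENNReal.ofReal (((lam:ℝ) ^ k) ^ q)) := by
                  apply mul_le_mul_right
                  conv_lhs => rw [← one_mul (ENNReal.ofReal (((lam:ℝ) ^ k) ^ q))]
                  exact mul_le_mul_left (by
                    simpa using ENNReal.ofReal_le_ofReal hlabs1) _
              _ = cA ^ e * ENNReal.ofReal (lam ^ |q|) * ENNReal.ofReal (((lam:ℝ) ^ k) ^ q) := by
                  ring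
        -- now combine: vol^e ≤ K0 * ofReal (t^q)
        have hcomb : (vol (D.cube i)) ^ e ≤ K0 * ENNReal.ofReal (t ^ q) := by
          have h1 : ENNReal.ofReal (((lam:ℝ) ^ k) ^ q) ≤
              ENNReal.ofReal (lam ^ |q|) * ENNReal.ofReal (t ^ q) := by
            rw [← ENNReal.ofReal_mul hlabs0.le]
            apply ENNReal.ofReal_le_ofReal
            calc ((lam:ℝ) ^ k) ^ q = lam ^ |q| * (lam ^ (-|q|) * ((lam:ℝ) ^ k) ^ q) := by
                  rw [← mul_assoc, ← Real.rpow_add hl0]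
                  simp
              _ ≤ lam ^ |q| * t ^ q := by
                  apply mul_le_mul_of_nonneg_left hden hlabs0.le
          calc (vol (D.cube i)) ^ e ≤
              cA ^ e * ENNReal.ofReal (lam ^ |q|) * ENNReal.ofReal (((lam:ℝ) ^ k) ^ q) := hvole
            _ ≤ cA ^ e * ENNReal.ofReal (lam ^ |q|) *
                (ENNReal.ofReal (lam ^ |q|) * ENNReal.ofReal (t ^ q)) :=
                mul_le_mul_right h1 _
            _ = K0 * ENNReal.ofReal (t ^ q) := by rw [hK0]; ring
        -- main chain
        have hmain : μ (Metric.ball x t) / ENNReal.ofReal (t ^ q) ≤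
            K0 * (μ (Metric.ball (D.center i) (2 * lam ^ (k + 2))) / (vol (D.cube i)) ^ e) := by
          calc μ (Metric.ball x t) / ENNReal.ofReal (t ^ q) ≤
              μ (Metric.ball (D.center i) (2 * lam ^ (k + 2))) / ENNReal.ofReal (t ^ q) :=
                ENNReal.div_le_div_right (measure_mono hball) _
            _ ≤ K0 * (μ (Metric.ball (D.center i) (2 * lam ^ (k + 2))) /
                (vol (D.cube i)) ^ e) :=
                aux_div hK0pos.ne' hK0top hcomb
        have hinv : ENNReal.ofReal t⁻¹ ≤ ENNReal.ofReal (((lam:ℝ) ^ k)⁻¹) :=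
          ENNReal.ofReal_le_ofReal (inv_anti₀ hBk0 hk1)
        calc (μ (Metric.ball x t) / ENNReal.ofReal (t ^ q)) ^ s * ENNReal.ofReal t⁻¹ ≤
            (K0 * (μ (Metric.ball (D.center i) (2 * lam ^ (k + 2))) /
              (vol (D.cube i)) ^ e)) ^ s * ENNReal.ofReal (((lam:ℝ) ^ k)⁻¹) :=
              mul_le_mul' (ENNReal.rpow_le_rpow hmain hs0.le) hinv
          _ = K0 ^ s * g k * ENNReal.ofReal (((lam:ℝ) ^ k)⁻¹) := by
              rw [ENNReal.mul_rpow_of_nonneg _ _ hs0.le, hgval]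
      -- integrate the constant bound
      have hSm : MeasurableSet (S k) := (measurableSet_Ico).inter measurableSet_Ioo
      calc (∫⁻ t in S k, (μ (Metric.ball x t) / ENNReal.ofReal (t ^ q)) ^ s *
            ENNReal.ofReal t⁻¹) ≤
          ∫⁻ _ in S k, K0 ^ s * g k * ENNReal.ofReal (((lam:ℝ) ^ k)⁻¹) :=
            setLIntegral_mono' hSm hpt
        _ = K0 ^ s * g k * ENNReal.ofReal (((lam:ℝ) ^ k)⁻¹) * volume (S k) :=
            setLIntegral_const _ _
        _ ≤ K0 ^ s * g k * ENNReal.ofReal (((lam:ℝ) ^ k)⁻¹) *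
            ENNReal.ofReal (lam * lam ^ k) := by
            apply mul_le_mul_right
            calc volume (S k) ≤ volume (Ico ((lam:ℝ) ^ k) (lam ^ (k+1))) :=
                  measure_mono inter_subset_left
              _ = ENNReal.ofReal ((lam:ℝ) ^ (k+1) - lam ^ k) := by
                  rw [Real.volume_Ico]
              _ ≤ ENNReal.ofReal (lam * lam ^ k) := by
                  apply ENNReal.ofReal_le_ofReal
                  rw [zpow_add_one₀ hl0.ne']
                  nlinarith [zpow_pos hl0 k]
        _ = K0 ^ s * ENNReal.ofReal lam * g k := by
            rw [mul_assoc, mul_assoc, ← ENNReal.ofReal_mul (by positivity)]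
            rw [show (((lam:ℝ) ^ k)⁻¹ * (lam * lam ^ k)) = lam by
              field_simp]
            ring
    · -- degenerate case : S k is empty
      have hSe : S k = ∅ := by
        rw [eq_empty_iff_forall_notMem]
        rintro t ⟨⟨hk1, hk2⟩, ht1, ht2⟩
        apply h
        constructor
        · -- D.base ≤ k
          by_contra hbk
          push_neg at hbk
          have h1 : (lam:ℝ) ^ (k+1) ≤ lam ^ D.base := zpow_le_zpow_right₀ hl1.le (by omega)
          have h2 : (lam:ℝ) ^ D.base ≤ lam ^ m * r := by
            rw [hbase, zpow_add₀ hl0.ne']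
            apply mul_le_mul_of_nonneg_left hKr (zpow_pos hl0 m).le
          linarith
        · linarith
      rw [hSe, Measure.restrict_empty, lintegral_zero_measure]
      exact zero_le'
  -- put all pieces together
  have hg_le : ∑' k : ℤ, g k ≤
      ∑' Q : {Q : D.ι // lam ^ D.gen Q ≤ r},
        Set.indicator (D.cube Q.1)
          (fun _ =>
            (μ (Metric.ball (D.center Q.1) (2 * lam ^ (D.gen Q.1 + 2))) /
              (vol (D.cube Q.1)) ^ e) ^ s) x := by
    have hsupp : Function.support g ⊆ {k : ℤ | D.base ≤ k ∧ (lam:ℝ) ^ k ≤ r} := by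
      intro k hk
      by_contra hc
      apply hk
      rw [hg]
      exact dif_neg hc
    rw [← tsum_subtype_eq_of_support_subset hsupp]
    set T := {k : ℤ | D.base ≤ k ∧ (lam:ℝ) ^ k ≤ r}
    have hφ : ∀ kk : T, lam ^ D.gen (idx kk.1 kk.2.1) ≤ r := by
      intro kk
      rw [hgen kk.1 kk.2.1]
      exact kk.2.2
    set φ : T → {Q : D.ι // lam ^ D.gen Q ≤ r} := fun kk => ⟨idx kk.1 kk.2.1, hφ kk⟩ with hφdef
    have hφinj : Function.Injective φ := by
      rintro ⟨k1, h1⟩ ⟨k2, h2⟩ heq2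
      have : idx k1 h1.1 = idx k2 h2.1 := congrArg Subtype.val heq2
      have hk12 : k1 = k2 := by
        rw [← hgen k1 h1.1, ← hgen k2 h2.1, this]
      exact Subtype.ext hk12
    have hgF : ∀ kk : T, g kk.1 =
        Set.indicator (D.cube (φ kk).1)
          (fun _ =>
            (μ (Metric.ball (D.center (φ kk).1) (2 * lam ^ (D.gen (φ kk).1 + 2))) /
              (vol (D.cube (φ kk).1)) ^ e) ^ s) x := by
      rintro ⟨k, hk⟩
      rw [hg]
      simp only [dif_pos hk, hφdef]
      rw [Set.indicator_of_mem (hmem k hk.1)]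
      rw [hgen k hk.1]
      exact dif_pos hk
    calc ∑' kk : T, g kk.1 = ∑' kk : T,
        Set.indicator (D.cube (φ kk).1)
          (fun _ =>
            (μ (Metric.ball (D.center (φ kk).1) (2 * lam ^ (D.gen (φ kk).1 + 2))) /
              (vol (D.cube (φ kk).1)) ^ e) ^ s) x := tsum_congr hgF
      _ ≤ _ := ENNReal.tsum_comp_le_tsum_of_injective hφinj _
  calc (∫⁻ t in Set.Ioo ((lam:ℝ) ^ m * r) r,
        (μ (Metric.ball x t) / ENNReal.ofReal (t ^ q)) ^ s * ENNReal.ofReal t⁻¹) ≤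
      ∫⁻ t in ⋃ k : ℤ, S k,
        (μ (Metric.ball x t) / ENNReal.ofReal (t ^ q)) ^ s * ENNReal.ofReal t⁻¹ :=
        lintegral_mono_set hcov
    _ ≤ ∑' k : ℤ, ∫⁻ t in S k,
        (μ (Metric.ball x t) / ENNReal.ofReal (t ^ q)) ^ s * ENNReal.ofReal t⁻¹ :=
        lintegral_iUnion_le _ _
    _ ≤ ∑' k : ℤ, K0 ^ s * ENNReal.ofReal lam * g k := ENNReal.tsum_le_tsum key
    _ = K0 ^ s * ENNReal.ofReal lam * ∑' k : ℤ, g k := ENNReal.tsum_mul_left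
    _ ≤ _ := mul_le_mul_right hg_le _
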